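/- Let n ≥ 0 and i ≥ 0 be integers and let A be a nonempty set of leaves. Then for every leaf configuration on the event { ∇^A 1_{{X(e_n)=i}} ≠ 0 }, one has Θ^A X(e_n) = Σ_{v ∈ L_{e_n,A}} X(v) + Σ_{u ∈ A} X_0^*(u) − |O_{e_n,A}|. -/

import Mathlib

noncomputable section

/-- Root value of the depth-`n` `m`-ary tree from leaf values, via
`X(w) = (X(1w) + ⋯ + X(mw) - 1)⁺` (root branches by the last letter of a leaf word). -/
def rootVal (m : ℕ) : (n : ℕ) → ((Fin n → Fin m) → ℕ) → ℕ
  | 0, f => f Fin.elim0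
  | n + 1, f => (∑ a : Fin m, rootVal m n (fun w => f (Fin.snoc w a))) - 1

/-- Value at the vertex given by a word `w` of length `ℓ ≤ n` (a suffix of leaf words). -/
def vertexVal (m n ℓ : ℕ) (hℓ : ℓ ≤ n) (f : (Fin n → Fin m) → ℕ)
    (w : Fin ℓ → Fin m) : ℕ :=
  rootVal m (n - ℓ) (fun u => f (fun i =>
    if h : (i : ℕ) < n - ℓ then u ⟨i, h⟩
    else w ⟨(i : ℕ) - (n - ℓ), by have := i.2; omega⟩))

/-- Words over `{1,…,m}` of length at most `n` (the vertices of the tree). -/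
abbrev Word (m n : ℕ) := Σ ℓ : Fin (n + 1), Fin (ℓ : ℕ) → Fin m

/-- Value at the vertex given by a word. -/
def wordVal {m n : ℕ} (f : (Fin n → Fin m) → ℕ) (w : Word m n) : ℕ :=
  vertexVal m n (w.1 : ℕ) (Nat.lt_succ_iff.mp w.1.2) f w.2

/-- `v_i`: the word obtained from the leaf word `v` by deleting its first `i` letters. -/
def wordDrop {m n : ℕ} (v : Fin n → Fin m) (i : ℕ) : Word m n :=
  ⟨⟨n - i, Nat.lt_succ_of_le (Nat.sub_le n i)⟩,
    fun j => v ⟨i + (j : ℕ), by have h2 : (j : ℕ) < n - i := j.2; omega⟩⟩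

/-- A leaf, seen as a word of length `n`. -/
def leafWord {m n : ℕ} (v : Fin n → Fin m) : Word m n := ⟨Fin.last n, v⟩

/-- `w = a·o` for some letter `a`: `w` is a parent of `o` (one more letter in front). -/
def isCons {m n : ℕ} (w o : Word m n) : Prop :=
  (w.1 : ℕ) = (o.1 : ℕ) + 1 ∧
    ∀ j : Fin (o.1 : ℕ), ∀ h : (j : ℕ) + 1 < (w.1 : ℕ), o.2 j = w.2 ⟨(j : ℕ) + 1, h⟩

open scoped Classical in
/-- `O_{e_n,A} = {v_i : v ∈ A, 1 ≤ i ≤ n}`. -/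
def spineSet {m n : ℕ} (A : Finset (Fin n → Fin m)) : Finset (Word m n) :=
  (A ×ˢ Finset.Icc 1 n).image (fun q => wordDrop q.1 q.2)

open scoped Classical in
/-- `L_{e_n,A} = {a·w : w ∈ O_{e_n,A}, a ∈ {1,…,m}} \ (O_{e_n,A} ∪ A)`. -/
def sideSet {m n : ℕ} (A : Finset (Fin n → Fin m)) : Finset (Word m n) :=
  Finset.univ.filter (fun w : Word m n =>
    (∃ o ∈ spineSet A, isCons w o) ∧ w ∉ spineSet A ∧ ∀ v ∈ A, w ≠ leafWord v)

/-- `Θ^B X`: leaf configuration equal to `X(v) = X_0^*(v)·u(v)` off `B` and to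
`X_0^*(v)` on `B`. -/
def thetaCfg {m n : ℕ} (Xs : (Fin n → Fin m) → ℕ) (u : (Fin n → Fin m) → Bool)
    (B : Finset (Fin n → Fin m)) : (Fin n → Fin m) → ℕ :=
  fun v => if v ∈ B then Xs v else (if u v then Xs v else 0)

/-- `∇^A f(X) = Σ_{B ⊆ A} (-1)^{|A|-|B|} f(Θ^B X)`. -/
def nablaCfg {m n : ℕ} (Xs : (Fin n → Fin m) → ℕ) (u : (Fin n → Fin m) → Bool)
    (A : Finset (Fin n → Fin m)) (f : ((Fin n → Fin m) → ℕ) → ℝ) : ℝ :=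
  ∑ B ∈ A.powerset, (-1 : ℝ) ^ (A.card - B.card) * f (thetaCfg Xs u B)

theorem word_ext {m n : ℕ} {w w' : Word m n} (h1 : (w.1 : ℕ) = (w'.1 : ℕ))
    (h2 : ∀ j : ℕ, (hj : j < (w.1 : ℕ)) → (hj' : j < (w'.1 : ℕ)) →
      w.2 ⟨j, hj⟩ = w'.2 ⟨j, hj'⟩) : w = w' := by
  obtain ⟨⟨l, hl⟩, f⟩ := w
  obtain ⟨⟨l', hl'⟩, f'⟩ := w'
  simp only [Fin.val_mk] at h1
  subst h1
  have : f = f' := funext fun j => by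
    have := h2 j.1 j.2 j.2
    simpa using this
  subst this
  rfl

theorem vertexVal_zero {m n : ℕ} (f : (Fin n → Fin m) → ℕ) (w : Fin 0 → Fin m) :
    vertexVal m n 0 (Nat.zero_le n) f w = rootVal m n f := by
  unfold vertexVal
  congr 1
  funext u
  congr 1
  funext i
  rw [dif_pos (show (i : ℕ) < n - 0 from by omega)]
  exact congrArg u (Fin.ext rfl)

theorem rootVal_cast {m k k' : ℕ} (h : k = k') (f : (Fin k → Fin m) → ℕ) :
    rootVal m k f = rootVal m k' (fun u => f (fun i => u (Fin.cast h i))) := by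
  subst h
  rfl

theorem vertexVal_n {m n : ℕ} (f : (Fin n → Fin m) → ℕ) (w : Fin n → Fin m) :
    vertexVal m n n le_rfl f w = f w := by
  unfold vertexVal
  rw [rootVal_cast (Nat.sub_self n)]
  show f _ = f w
  congr 1
  funext i
  rw [dif_neg (by omega)]
  exact congrArg w (Fin.ext (by simp))

theorem rootVal_mono {m : ℕ} : ∀ (n : ℕ) (f f' : (Fin n → Fin m) → ℕ),
    (∀ v, f v ≤ f' v) → rootVal m n f ≤ rootVal m n f'
  | 0, f, f', h => h _
  | n + 1, f, f', h => by
    unfold rootVal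
    exact Nat.sub_le_sub_right
      (Finset.sum_le_sum fun a _ => rootVal_mono n _ _ fun v => h _) 1

theorem vertexVal_mono {m n ℓ : ℕ} (hℓ : ℓ ≤ n) (f f' : (Fin n → Fin m) → ℕ)
    (h : ∀ v, f v ≤ f' v) (w : Fin ℓ → Fin m) :
    vertexVal m n ℓ hℓ f w ≤ vertexVal m n ℓ hℓ f' w :=
  rootVal_mono _ _ _ fun u => h _

theorem vertexVal_congr {m n ℓ : ℕ} (hℓ : ℓ ≤ n) (f f' : (Fin n → Fin m) → ℕ)
    (w : Fin ℓ → Fin m)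
    (h : ∀ v : Fin n → Fin m,
      (∀ j : Fin ℓ, v ⟨n - ℓ + (j : ℕ), by have := j.2; omega⟩ = w j) → f v = f' v) :
    vertexVal m n ℓ hℓ f w = vertexVal m n ℓ hℓ f' w := by
  unfold vertexVal
  congr 1
  funext u
  apply h
  intro j
  rw [dif_neg (by simp only [Fin.val_mk]; omega)]
  exact congrArg w (Fin.ext (by simp))

def consF {m ℓ : ℕ} (a : Fin m) (w : Fin ℓ → Fin m) : Fin (ℓ + 1) → Fin m :=
  fun j => if h0 : (j : ℕ) = 0 then a else w ⟨(j : ℕ) - 1, by have := j.2; omega⟩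

theorem vertexVal_cons {m n ℓ : ℕ} (hℓ : ℓ < n) (f : (Fin n → Fin m) → ℕ)
    (w : Fin ℓ → Fin m) :
    vertexVal m n ℓ (le_of_lt hℓ) f w =
      (∑ a : Fin m, vertexVal m n (ℓ + 1) hℓ f (consF a w)) - 1 := by
  unfold vertexVal
  rw [rootVal_cast (show n - ℓ = (n - (ℓ + 1)) + 1 from by omega)]
  rw [show ∀ (g : (Fin (n - (ℓ+1) + 1) → Fin m) → ℕ), rootVal m (n - (ℓ+1) + 1) g
      = (∑ a : Fin m, rootVal m (n - (ℓ+1)) (fun w => g (Fin.snoc w a))) - 1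
    from fun g => rfl]
  congr 1
  apply Finset.sum_congr rfl
  intro a _
  congr 1
  funext u
  congr 1
  funext i
  have snoc_of_lt : ∀ (p : Fin (n - (ℓ+1) + 1)) (hp : (p : ℕ) < n - (ℓ+1)),
      (Fin.snoc u a : Fin (n - (ℓ+1) + 1) → Fin m) p = u ⟨(p : ℕ), hp⟩ := by
    intro p hp
    conv_lhs => rw [show p = Fin.castSucc ⟨(p : ℕ), hp⟩ from Fin.ext rfl]
    rw [Fin.snoc_castSucc]
  have snoc_last' : ∀ (p : Fin (n - (ℓ+1) + 1)), (p : ℕ) = n - (ℓ+1) →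
      (Fin.snoc u a : Fin (n - (ℓ+1) + 1) → Fin m) p = a := by
    intro p hp
    conv_lhs => rw [show p = Fin.last _ from Fin.ext (by simpa using hp)]
    rw [Fin.snoc_last]
  by_cases h1 : (i : ℕ) < n - (ℓ + 1)
  · rw [dif_pos (show (i:ℕ) < n - ℓ from by omega), dif_pos h1]
    exact (snoc_of_lt _ (by simpa using h1)).trans (congrArg u (Fin.ext (by simp)))
  · by_cases h2 : (i : ℕ) = n - (ℓ + 1)
    · rw [dif_pos (show (i:ℕ) < n - ℓ from by omega), dif_neg (by omega)]
      refine (snoc_last' _ (by simpa using h2)).trans ?_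
      show a = consF a w _
      unfold consF
      rw [dif_pos (by simp; omega)]
    · rw [dif_neg (by omega), dif_neg (by omega)]
      show w _ = consF a w _
      unfold consF
      rw [dif_neg (by simp; omega)]
      exact congrArg w (Fin.ext (by simp; omega))

-- word-level lemmas
def rootWord {m n : ℕ} : Word m n := ⟨⟨0, Nat.succ_pos n⟩, Fin.elim0⟩

theorem wordVal_rootWord {m n : ℕ} (f : (Fin n → Fin m) → ℕ) :
    wordVal f (rootWord : Word m n) = rootVal m n f := by
  have : wordVal f (rootWord : Word m n)
      = vertexVal m n 0 (Nat.zero_le n) f Fin.elim0 := rfl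
  rw [this, vertexVal_zero]

theorem wordVal_leafWord {m n : ℕ} (f : (Fin n → Fin m) → ℕ) (v : Fin n → Fin m) :
    wordVal f (leafWord v) = f v := by
  have : wordVal f (leafWord v) = vertexVal m n n le_rfl f v := rfl
  rw [this, vertexVal_n]

def consWord {m n : ℕ} (a : Fin m) (o : Word m n) (h : (o.1 : ℕ) < n) : Word m n :=
  ⟨⟨(o.1 : ℕ) + 1, by omega⟩, consF a o.2⟩

theorem isCons_consWord {m n : ℕ} (a : Fin m) (o : Word m n) (h : (o.1 : ℕ) < n) :
    isCons (consWord a o h) o := by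
  refine ⟨rfl, fun j hj => ?_⟩
  show o.2 j = consF a o.2 ⟨(j : ℕ) + 1, hj⟩
  unfold consF
  rw [dif_neg (by simp)]
  exact congrArg o.2 (Fin.ext (by simp))

theorem eq_consWord_of_isCons {m n : ℕ} {w o : Word m n} (hc : isCons w o)
    (h : (o.1 : ℕ) < n) :
    w = consWord (w.2 ⟨0, by rw [hc.1]; exact Nat.succ_pos _⟩) o h := by
  apply word_ext
  · exact hc.1
  · intro j hj hj'
    show w.2 ⟨j, hj⟩ = consF _ o.2 ⟨j, hj'⟩
    unfold consF
    by_cases h0 : j = 0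
    · rw [dif_pos (by simpa using h0)]
      exact congrArg w.2 (Fin.ext (by simpa using h0))
    · rw [dif_neg (by simpa using h0)]
      have := hc.2 ⟨j - 1, by have := hj; rw [hc.1] at this; omega⟩
        (by simp only [Fin.val_mk]; omega)
      refine Eq.symm (this.trans (congrArg w.2 (Fin.ext (by simp; omega))))

theorem wordVal_consWord {m n : ℕ} (f : (Fin n → Fin m) → ℕ) (o : Word m n)
    (h : (o.1 : ℕ) < n) (a : Fin m) :
    wordVal f (consWord a o h) = vertexVal m n ((o.1 : ℕ) + 1) h f (consF a o.2) := rfl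

theorem wordVal_cons_sum {m n : ℕ} (f : (Fin n → Fin m) → ℕ) (o : Word m n)
    (h : (o.1 : ℕ) < n) :
    wordVal f o = (∑ a : Fin m, wordVal f (consWord a o h)) - 1 := by
  have : wordVal f o = vertexVal m n (o.1 : ℕ) (le_of_lt h) f o.2 := rfl
  rw [this, vertexVal_cons h]
  rfl

theorem word_entry_congr {m n : ℕ} {w w' : Word m n} (e : w = w') :
    ∀ (j : ℕ) (hj : j < (w.1 : ℕ)) (hj' : j < (w'.1 : ℕ)),
      w.2 ⟨j, hj⟩ = w'.2 ⟨j, hj'⟩ := by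
  subst e; intro j hj hj'; rfl

theorem mem_spineSet {m n : ℕ} {A : Finset (Fin n → Fin m)} {o : Word m n} :
    o ∈ spineSet A ↔ ∃ v ∈ A, ∃ i, 1 ≤ i ∧ i ≤ n ∧ o = wordDrop v i := by
  classical
  simp only [spineSet, Finset.mem_image, Finset.mem_product, Finset.mem_Icc, Prod.exists]
  constructor
  · rintro ⟨v, i, ⟨hv, h1, h2⟩, rfl⟩
    exact ⟨v, hv, i, h1, h2, rfl⟩
  · rintro ⟨v, hv, i, h1, h2, rfl⟩
    exact ⟨v, i, ⟨hv, h1, h2⟩, rfl⟩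

theorem spine_len_lt {m n : ℕ} {A : Finset (Fin n → Fin m)} {o : Word m n}
    (ho : o ∈ spineSet A) : (o.1 : ℕ) < n := by
  obtain ⟨v, hv, i, h1, h2, rfl⟩ := mem_spineSet.mp ho
  show n - i < n
  omega

theorem rootWord_mem_spineSet {m n : ℕ} {A : Finset (Fin n → Fin m)}
    (hA : A.Nonempty) (hn : 1 ≤ n) : (rootWord : Word m n) ∈ spineSet A := by
  obtain ⟨v, hv⟩ := hA
  refine mem_spineSet.mpr ⟨v, hv, n, hn, le_rfl, ?_⟩
  apply word_ext
  · show (0 : ℕ) = n - n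
    omega
  · intro j hj hj'
    exact absurd hj (by show ¬ j < 0; omega)

theorem consF_zero {m ℓ : ℕ} (a : Fin m) (w : Fin ℓ → Fin m) (h0 : 0 < ℓ + 1) :
    consF a w ⟨0, h0⟩ = a := dif_pos rfl

theorem consF_succ {m ℓ : ℕ} (a : Fin m) (w : Fin ℓ → Fin m) (j : ℕ)
    (h1 : j + 1 < ℓ + 1) (hj : j < ℓ) : consF a w ⟨j + 1, h1⟩ = w ⟨j, hj⟩ := by
  unfold consF
  rw [dif_neg (by simp)]
  exact congrArg w (Fin.ext (by simp))

theorem consWord_entry_zero {m n : ℕ} (a : Fin m) (o : Word m n) (h : (o.1:ℕ) < n)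
    (p : 0 < ((consWord a o h).1 : ℕ)) : (consWord a o h).2 ⟨0, p⟩ = a :=
  consF_zero a o.2 p

theorem consWord_entry_succ {m n : ℕ} (a : Fin m) (o : Word m n) (h : (o.1:ℕ) < n)
    (j : ℕ) (p : j + 1 < ((consWord a o h).1 : ℕ)) (hj : j < (o.1:ℕ)) :
    (consWord a o h).2 ⟨j + 1, p⟩ = o.2 ⟨j, hj⟩ :=
  consF_succ a o.2 j p hj

theorem consWord_inj {m n : ℕ} {a a' : Fin m} {o o' : Word m n}
    {h : (o.1 : ℕ) < n} {h' : (o'.1 : ℕ) < n}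
    (e : consWord a o h = consWord a' o' h') : a = a' ∧ o = o' := by
  have hl : (o.1 : ℕ) = (o'.1 : ℕ) := by
    have := congrArg (fun w : Word m n => (w.1 : ℕ)) e
    simpa [consWord] using this
  constructor
  · have := word_entry_congr e 0 (by show 0 < (o.1:ℕ)+1; omega)
      (by show 0 < (o'.1:ℕ)+1; omega)
    rw [consWord_entry_zero, consWord_entry_zero] at this
    exact this
  · apply word_ext hl
    intro j hj hj'
    have := word_entry_congr e (j+1) (by show j+1 < (o.1:ℕ)+1; omega)
      (by show j+1 < (o'.1:ℕ)+1; omega)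
    rw [consWord_entry_succ a o h j _ hj, consWord_entry_succ a' o' h' j _ hj'] at this
    exact this

open scoped Classical in
def childSet {m n : ℕ} (A : Finset (Fin n → Fin m)) : Finset (Word m n) :=
  Finset.univ.filter (fun w : Word m n => ∃ o ∈ spineSet A, isCons w o)

theorem sum_childSet {m n : ℕ} (A : Finset (Fin n → Fin m)) (g : (Fin n → Fin m) → ℕ) :
    ∑ o ∈ (spineSet A).attach, ∑ a : Fin m,
        (wordVal g (consWord a o.1 (spine_len_lt o.2)) : ℤ)
      = ∑ w ∈ childSet A, (wordVal g w : ℤ) := by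
  classical
  rw [← Finset.sum_product' (s := (spineSet A).attach) (t := Finset.univ)]
  refine Finset.sum_bij (fun p _ => consWord p.2 p.1.1 (spine_len_lt p.1.2)) ?_ ?_ ?_ ?_
  · intro p _
    simp only [childSet, Finset.mem_filter, Finset.mem_univ, true_and]
    exact ⟨p.1.1, p.1.2, isCons_consWord _ _ _⟩
  · intro p hp q hq e
    obtain ⟨ha, ho⟩ := consWord_inj e
    exact Prod.ext (Subtype.ext ho) ha
  · intro w hw
    simp only [childSet, Finset.mem_filter, Finset.mem_univ, true_and] at hw
    obtain ⟨o, ho, hc⟩ := hw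
    refine ⟨(⟨o, ho⟩, w.2 ⟨0, by rw [hc.1]; exact Nat.succ_pos _⟩), ?_, ?_⟩
    · simp
    · exact (eq_consWord_of_isCons hc (spine_len_lt ho)).symm
  · intro p _
    rfl

theorem wordDrop_eq_rootWord {m n : ℕ} (v : Fin n → Fin m) (i : ℕ) (h : n - i = 0) :
    wordDrop v i = (rootWord : Word m n) := by
  apply word_ext
  · show n - i = 0
    exact h
  · intro j hj hj'
    exact absurd hj' (by show ¬ j < 0; omega)

theorem mem_childSet_of_spine_ne_root {m n : ℕ} {A : Finset (Fin n → Fin m)}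
    {o : Word m n} (ho : o ∈ spineSet A) (hne : o ≠ rootWord) : o ∈ childSet A := by
  classical
  obtain ⟨v, hv, i, h1, h2, rfl⟩ := mem_spineSet.mp ho
  have hlen : 1 ≤ n - i := by
    by_contra hcon
    exact hne (wordDrop_eq_rootWord v i (by omega))
  simp only [childSet, Finset.mem_filter, Finset.mem_univ, true_and]
  refine ⟨wordDrop v (i+1), mem_spineSet.mpr ⟨v, hv, i+1, by omega, by omega, rfl⟩, ?_, ?_⟩
  · show n - i = (n - (i+1)) + 1
    omega
  · intro j hj
    show v _ = v _
    exact congrArg v (Fin.ext (by simp; omega))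

theorem ne_rootWord_of_mem_childSet {m n : ℕ} {A : Finset (Fin n → Fin m)}
    {w : Word m n} (hw : w ∈ childSet A) : w ≠ rootWord := by
  classical
  simp only [childSet, Finset.mem_filter, Finset.mem_univ, true_and] at hw
  obtain ⟨o, _, hc⟩ := hw
  intro e
  have : (w.1 : ℕ) = 0 := by rw [e]; rfl
  rw [hc.1] at this
  omega

theorem leafWord_inj {m n : ℕ} {v v' : Fin n → Fin m} (e : leafWord v = leafWord v') :
    v = v' := by
  funext j
  have := word_entry_congr e j (by show (j:ℕ) < n; exact j.2) (by show (j:ℕ) < n; exact j.2)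
  exact this

theorem leafWord_not_mem_spineSet {m n : ℕ} {A : Finset (Fin n → Fin m)}
    {v : Fin n → Fin m} : leafWord v ∉ spineSet A := by
  intro h
  have := spine_len_lt h
  simp [leafWord] at this

theorem leafWord_mem_childSet {m n : ℕ} {A : Finset (Fin n → Fin m)} (hn : 1 ≤ n)
    {v : Fin n → Fin m} (hv : v ∈ A) : leafWord v ∈ childSet A := by
  classical
  simp only [childSet, Finset.mem_filter, Finset.mem_univ, true_and]
  refine ⟨wordDrop v 1, mem_spineSet.mpr ⟨v, hv, 1, le_rfl, hn, rfl⟩, ?_, ?_⟩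
  · show n = (n - 1) + 1
    omega
  · intro j hj
    show v _ = v _
    exact congrArg v (Fin.ext (by simp [leafWord]; omega))

open scoped Classical in
theorem main_identity {m n : ℕ} (hn : 1 ≤ n) (A : Finset (Fin n → Fin m)) (hA : A.Nonempty)
    (g : (Fin n → Fin m) → ℕ)
    (H : ∀ o (ho : o ∈ spineSet A),
      1 ≤ ∑ a : Fin m, wordVal g (consWord a o (spine_len_lt ho))) :
    (rootVal m n g : ℤ) = (∑ w ∈ sideSet A, (wordVal g w : ℤ))
      + (∑ v ∈ A, (g v : ℤ)) - (spineSet A).card := by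
  classical
  have step1 : ∑ o ∈ (spineSet A).attach, (wordVal g o.1 : ℤ)
      = (∑ w ∈ childSet A, (wordVal g w : ℤ)) - (spineSet A).card := by
    rw [← sum_childSet A g]
    have e : ∀ o ∈ (spineSet A).attach, (wordVal g o.1 : ℤ)
        = (∑ a : Fin m, (wordVal g (consWord a o.1 (spine_len_lt o.2)) : ℤ)) - 1 := by
      intro o _
      rw [wordVal_cons_sum g o.1 (spine_len_lt o.2), Nat.cast_sub (H o.1 o.2)]
      push_cast
      ring
    rw [Finset.sum_congr rfl e, Finset.sum_sub_distrib, Finset.sum_const,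
      Finset.card_attach, nsmul_eq_mul, mul_one]
  have split1 := Finset.sum_filter_add_sum_filter_not (childSet A)
    (fun w => w ∈ spineSet A) (fun w => (wordVal g w : ℤ))
  have split2 := Finset.sum_filter_add_sum_filter_not
    ((childSet A).filter (fun w => ¬ w ∈ spineSet A))
    (fun w => ∀ v ∈ A, w ≠ leafWord v) (fun w => (wordVal g w : ℤ))
  have hfe1 : (childSet A).filter (fun w => w ∈ spineSet A)
      = (spineSet A).erase rootWord := by
    ext w
    simp only [Finset.mem_filter, Finset.mem_erase]
    constructor
    · rintro ⟨hc, hs⟩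
      exact ⟨ne_rootWord_of_mem_childSet hc, hs⟩
    · rintro ⟨hne, hs⟩
      exact ⟨mem_childSet_of_spine_ne_root hs hne, hs⟩
  have hfe3 : ((childSet A).filter (fun w => ¬ w ∈ spineSet A)).filter
      (fun w => ∀ v ∈ A, w ≠ leafWord v) = sideSet A := by
    ext w
    simp only [Finset.mem_filter, Finset.mem_univ, sideSet, childSet, true_and]
    tauto
  have hfe4 : ((childSet A).filter (fun w => ¬ w ∈ spineSet A)).filter
      (fun w => ¬ ∀ v ∈ A, w ≠ leafWord v) = A.image leafWord := by
    ext w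
    simp only [Finset.mem_filter, Finset.mem_image]
    constructor
    · rintro ⟨⟨hc, hns⟩, hq⟩
      push_neg at hq
      obtain ⟨v, hv, e⟩ := hq
      exact ⟨v, hv, e.symm⟩
    · rintro ⟨v, hv, rfl⟩
      exact ⟨⟨leafWord_mem_childSet hn hv, leafWord_not_mem_spineSet⟩,
        by push_neg; exact ⟨v, hv, rfl⟩⟩
  have himg : ∑ w ∈ A.image leafWord, (wordVal g w : ℤ) = ∑ v ∈ A, (g v : ℤ) := by
    rw [Finset.sum_image (fun x _ y _ e => leafWord_inj e)]
    exact Finset.sum_congr rfl fun v _ => by rw [wordVal_leafWord]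
  have herase : ∑ w ∈ (spineSet A).erase rootWord, (wordVal g w : ℤ)
      = (∑ w ∈ spineSet A, (wordVal g w : ℤ)) - (rootVal m n g : ℤ) := by
    rw [← Finset.sum_erase_add (spineSet A) _ (rootWord_mem_spineSet hA hn),
      wordVal_rootWord]
    ring
  rw [Finset.sum_attach (spineSet A) (fun o => (wordVal g o : ℤ))] at step1
  rw [hfe1, herase] at split1
  rw [hfe3, hfe4, himg] at split2
  linarith [step1, split1, split2]

theorem signed_sum_zero {α : Type*} [DecidableEq α] (A : Finset α) (v : α) (hv : v ∈ A)
    (F : Finset α → ℝ) (hF : ∀ B ∈ A.powerset, F B = F (B.erase v)) :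
    ∑ B ∈ A.powerset, (-1 : ℝ) ^ (A.card - B.card) * F B = 0 := by
  refine Finset.sum_involution
    (fun B _ => if v ∈ B then B.erase v else insert v B) ?_ ?_ ?_ ?_
  · intro B hB
    rw [Finset.mem_powerset] at hB
    by_cases hvB : v ∈ B
    · simp only [if_pos hvB]
      have hcard : B.card - 1 + 1 = B.card := Nat.succ_pred_eq_of_pos
        (Finset.card_pos.mpr ⟨v, hvB⟩)
      have h1 : (B.erase v).card = B.card - 1 := Finset.card_erase_of_mem hvB
      have h2 : B.card ≤ A.card := Finset.card_le_card hB
      have hFv : F B = F (B.erase v) := hF B (Finset.mem_powerset.mpr hB)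
      rw [hFv, h1, show A.card - (B.card - 1) = (A.card - B.card) + 1 from by omega,
        pow_succ]
      ring
    · simp only [if_neg hvB]
      have h1 : (insert v B).card = B.card + 1 := Finset.card_insert_of_notMem hvB
      have h2 : insert v B ⊆ A := Finset.insert_subset (by exact hv) hB
      have h3 : (insert v B).card ≤ A.card := Finset.card_le_card h2
      have hFv : F (insert v B) = F B := by
        rw [hF (insert v B) (Finset.mem_powerset.mpr h2), Finset.erase_insert hvB]
      rw [hFv, h1, show A.card - B.card = (A.card - (B.card + 1)) + 1 from by omega,
        pow_succ]
      ring
  · intro B hB hne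
    by_cases hvB : v ∈ B
    · simp only [if_pos hvB]
      intro e
      have := Finset.notMem_erase v B
      rw [e] at this
      exact this hvB
    · simp only [if_neg hvB]
      intro e
      apply hvB
      rw [← e]
      exact Finset.mem_insert_self v B
  · intro B hB
    rw [Finset.mem_powerset] at hB ⊢
    by_cases hvB : v ∈ B
    · simp only [if_pos hvB]
      exact (Finset.erase_subset v B).trans hB
    · simp only [if_neg hvB]
      exact Finset.insert_subset hv hB
  · intro B hB
    by_cases hvB : v ∈ B
    · simp [if_pos hvB, Finset.notMem_erase, Finset.insert_erase hvB]
    · simp [if_neg hvB, Finset.mem_insert_self, Finset.erase_insert hvB]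

theorem rootVal_eq_of_agree {m n : ℕ} : ∀ (ℓ : ℕ) (hℓ : ℓ ≤ n) (w : Fin ℓ → Fin m)
    (g g' : (Fin n → Fin m) → ℕ),
    (∀ v : Fin n → Fin m,
      ¬(∀ j : Fin ℓ, v ⟨n - ℓ + (j : ℕ), by have := j.2; omega⟩ = w j) → g v = g' v) →
    vertexVal m n ℓ hℓ g w = vertexVal m n ℓ hℓ g' w →
    rootVal m n g = rootVal m n g'
  | 0, hℓ, w, g, g', hoff, hval => by
    rw [show vertexVal m n 0 hℓ g w = rootVal m n g from vertexVal_zero g w,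
      show vertexVal m n 0 hℓ g' w = rootVal m n g' from vertexVal_zero g' w] at hval
    exact hval
  | ℓ + 1, hℓ, w, g, g', hoff, hval => by
    have hℓn : ℓ < n := hℓ
    refine rootVal_eq_of_agree ℓ (le_of_lt hℓn) (fun j => w j.succ) g g' ?_ ?_
    · intro v hv
      apply hoff
      intro hall
      apply hv
      intro j
      have := hall ⟨(j : ℕ) + 1, by have := j.2; omega⟩
      rw [show v ⟨n - (ℓ+1) + ((j:ℕ)+1), _⟩ = v ⟨n - ℓ + (j:ℕ), by have := j.2; omega⟩
        from congrArg v (Fin.ext (by simp; omega))] at this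
      rw [this]
      exact congrArg w (Fin.ext rfl)
    · rw [vertexVal_cons hℓn g, vertexVal_cons hℓn g']
      congr 1
      apply Finset.sum_congr rfl
      intro a _
      by_cases ha : a = w ⟨0, Nat.succ_pos ℓ⟩
      · have hcw : consF a (fun j => w j.succ) = w := by
          funext j
          unfold consF
          by_cases hj0 : (j : ℕ) = 0
          · rw [dif_pos hj0, ha]
            exact congrArg w (Fin.ext (by simp [hj0]))
          · rw [dif_neg hj0]
            refine (congrArg w (Fin.ext ?_))
            show ((⟨(j:ℕ) - 1, by have := j.2; omega⟩ : Fin ℓ) : ℕ) + 1 = (j : ℕ)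
            simp only [Fin.val_mk]
            omega
        rw [hcw]
        exact hval
      · apply vertexVal_congr
        intro v hsuf
        apply hoff
        intro hall
        apply ha
        have h1 := hsuf ⟨0, Nat.succ_pos ℓ⟩
        have h2 := hall ⟨0, Nat.succ_pos ℓ⟩
        rw [show consF a (fun j => w j.succ) ⟨0, Nat.succ_pos ℓ⟩ = a from dif_pos rfl] at h1
        rw [← h1, ← h2]

theorem thetaCfg_le {m n : ℕ} (Xs : (Fin n → Fin m) → ℕ) (u : (Fin n → Fin m) → Bool)
    {B A : Finset (Fin n → Fin m)} (hBA : B ⊆ A) :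
    ∀ x, thetaCfg Xs u B x ≤ thetaCfg Xs u A x := by
  intro x
  unfold thetaCfg
  by_cases hxB : x ∈ B
  · rw [if_pos hxB, if_pos (hBA hxB)]
  · rw [if_neg hxB]
    split_ifs <;> omega

theorem thetaCfg_agree {m n : ℕ} (Xs : (Fin n → Fin m) → ℕ) (u : (Fin n → Fin m) → Bool)
    (B : Finset (Fin n → Fin m)) (v x : Fin n → Fin m) (hx : x ≠ v) :
    thetaCfg Xs u B x = thetaCfg Xs u (B.erase v) x := by
  unfold thetaCfg
  have : x ∈ B.erase v ↔ x ∈ B := by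
    rw [Finset.mem_erase]
    exact ⟨fun h => h.2, fun h => ⟨hx, h⟩⟩
  by_cases hxB : x ∈ B
  · rw [if_pos hxB, if_pos (this.mpr hxB)]
  · rw [if_neg hxB, if_neg (fun h => hxB (this.mp h))]


/-- Lemma 3.4. On the event `∇^A 1_{X(e_n)=i} ≠ 0`,
`Θ^A X(e_n) = Σ_{v ∈ L_{e_n,A}} X(v) + Σ_{u ∈ A} X_0^*(u) - |O_{e_n,A}|`. -/
theorem theta_root_decomposition
    (m : ℕ) (hm : 2 ≤ m) (n : ℕ) (i : ℕ)
    (Xs : (Fin n → Fin m) → ℕ) (hXs : ∀ v, 1 ≤ Xs v)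
    (u : (Fin n → Fin m) → Bool)
    (A : Finset (Fin n → Fin m)) (hA : A.Nonempty)
    (hnabla : nablaCfg Xs u A
      (fun g => if rootVal m n g = i then (1 : ℝ) else 0) ≠ 0) :
    (rootVal m n (thetaCfg Xs u A) : ℤ) =
      (∑ w ∈ sideSet A, (wordVal (fun v => if u v then Xs v else 0) w : ℤ)) +
        (∑ v ∈ A, (Xs v : ℤ)) - (spineSet A).card := by
  rcases Nat.eq_zero_or_pos n with hn0 | hn
  · subst hn0
    obtain ⟨v, hv⟩ := hA
    have hsub : ∀ x y : Fin 0 → Fin m, x = y := fun x y => funext fun j => j.elim0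
    have hA' : A = {v} :=
      Finset.eq_singleton_iff_unique_mem.mpr ⟨hv, fun x _ => hsub x v⟩
    have hspine : spineSet A = ∅ := by
      simp [spineSet]
    have hside : sideSet A = ∅ := by
      simp [sideSet, hspine]
    have hroot : rootVal m 0 (thetaCfg Xs u A) = Xs v := by
      show thetaCfg Xs u A Fin.elim0 = Xs v
      rw [hsub Fin.elim0 v]
      simp [thetaCfg, hv]
    rw [hroot, hspine, hside, hA']
    simp
  · have H : ∀ o (ho : o ∈ spineSet A),
        1 ≤ ∑ a : Fin m, wordVal (thetaCfg Xs u A) (consWord a o (spine_len_lt ho)) := by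
      intro o ho
      by_contra hcon
      obtain ⟨v, hvA, k, hk1, hk2, rfl⟩ := mem_spineSet.mp ho
      have hcon0 : ∑ a : Fin m,
          wordVal (thetaCfg Xs u A) (consWord a (wordDrop v k) (spine_len_lt ho)) = 0 := by
        omega
      apply hnabla
      show nablaCfg Xs u A _ = 0
      unfold nablaCfg
      apply signed_sum_zero A v hvA
      intro B hB
      rw [Finset.mem_powerset] at hB
      have hroot : rootVal m n (thetaCfg Xs u B)
          = rootVal m n (thetaCfg Xs u (B.erase v)) := by
        apply rootVal_eq_of_agree (n - k) (Nat.sub_le n k) (wordDrop v k).2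
        · intro x hx
          apply thetaCfg_agree
          intro hxv
          apply hx
          subst hxv
          intro j
          exact congrArg x (Fin.ext (by simp; omega))
        · have hA0 : vertexVal m n (n - k) (Nat.sub_le n k) (thetaCfg Xs u A)
              (wordDrop v k).2 = 0 := by
            have e : wordVal (thetaCfg Xs u A) (wordDrop v k)
                = vertexVal m n (n - k) (Nat.sub_le n k) (thetaCfg Xs u A)
                  (wordDrop v k).2 := rfl
            rw [← e, wordVal_cons_sum (thetaCfg Xs u A) (wordDrop v k) (spine_len_lt ho),
              hcon0]
          have h1 : vertexVal m n (n - k) (Nat.sub_le n k) (thetaCfg Xs u B)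
              (wordDrop v k).2 ≤ vertexVal m n (n - k) (Nat.sub_le n k)
                (thetaCfg Xs u A) (wordDrop v k).2 :=
            vertexVal_mono _ _ _ (thetaCfg_le Xs u hB) _
          have h2 : vertexVal m n (n - k) (Nat.sub_le n k) (thetaCfg Xs u (B.erase v))
              (wordDrop v k).2 ≤ vertexVal m n (n - k) (Nat.sub_le n k)
                (thetaCfg Xs u A) (wordDrop v k).2 :=
            vertexVal_mono _ _ _
              (thetaCfg_le Xs u ((Finset.erase_subset v B).trans hB)) _
          omega
      simp [hroot]
    rw [main_identity hn A hA (thetaCfg Xs u A) H]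
    have hApart : ∑ v ∈ A, (thetaCfg Xs u A v : ℤ) = ∑ v ∈ A, (Xs v : ℤ) := by
      apply Finset.sum_congr rfl
      intro v hv
      simp [thetaCfg, hv]
    have hSide : ∑ w ∈ sideSet A, (wordVal (thetaCfg Xs u A) w : ℤ)
        = ∑ w ∈ sideSet A, (wordVal (fun v => if u v then Xs v else 0) w : ℤ) := by
      apply Finset.sum_congr rfl
      intro w hw
      have hwmem := hw
      simp only [sideSet, Finset.mem_filter, Finset.mem_univ, true_and] at hwmem
      obtain ⟨⟨o, ho, hc⟩, hns, hnl⟩ := hwmem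
      have hwn : (w.1 : ℕ) ≤ n := Nat.lt_succ_iff.mp w.1.2
      have : wordVal (thetaCfg Xs u A) w
          = wordVal (fun v => if u v then Xs v else 0) w := by
        unfold wordVal
        apply vertexVal_congr
        intro x hsuf
        have hxA : x ∉ A := by
          intro hxA
          by_cases hlen : (w.1 : ℕ) = n
          · apply hnl x hxA
            apply word_ext
            · show (w.1 : ℕ) = n
              exact hlen
            · intro j hj hj'
              have := hsuf ⟨j, hj⟩
              rw [← this]
              exact congrArg x (Fin.ext (by simp; omega))
          · apply hns
            refine mem_spineSet.mpr ⟨x, hxA, n - (w.1 : ℕ), by omega, by omega, ?_⟩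
            apply word_ext
            · show (w.1 : ℕ) = n - (n - (w.1 : ℕ))
              omega
            · intro j hj hj'
              have := hsuf ⟨j, hj⟩
              rw [← this]
              show x _ = x _
              exact congrArg x (Fin.ext (by simp only [Fin.val_mk]))
        simp [thetaCfg, hxA]
      rw [this]
    rw [hApart, hSide]
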